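/- The Parikh image of every language recognized by a Parikh automaton is semilinear: if L ⊆ Σ* is recognized by a PA over the finite ordered alphabet Σ = {a₁, …, aₖ}, then Φ(L) = {Φ(w) | w ∈ L} is a semilinear subset of ℕᵏ, where Φ(w) counts the occurrences of each letter in w. -/

import Mathlib

open scoped Classical

noncomputable section

/-! ### Basic word and language notions -/

/-- Number of occurrences of `b` in the list `l`. -/
def countOcc {β : Type} (l : List β) (b : β) : ℕ :=
  (l.filter fun s => decide (s = b)).length

/-- `wpow w k` is the word `w` concatenated with itself `k` times. -/
def wpow {β : Type} (w : List β) : ℕ → List β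
  | 0 => []
  | k + 1 => w ++ wpow w k

/-- The word `w₁^{k₁} ⋯ wₙ^{kₙ}`. -/
def socProd {β : Type} {n : ℕ} (w : Fin n → List β) (k : Fin n → ℕ) : List β :=
  (List.ofFn fun i => wpow (w i) (k i)).flatten

/-- `w₁, …, wₙ` is a socle of `L`: the `wᵢ` are nonempty and `L ⊆ w₁* ⋯ wₙ*`. -/
def IsSocle {β : Type} {n : ℕ} (L : Set (List β)) (w : Fin n → List β) : Prop :=
  (∀ i, w i ≠ []) ∧ ∀ x ∈ L, ∃ k : Fin n → ℕ, x = socProd w k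

/-- A language is bounded if it has a socle. -/
def BoundedLang {β : Type} (L : Set (List β)) : Prop :=
  ∃ (n : ℕ) (w : Fin n → List β), 0 < n ∧ IsSocle L w

/-- The iteration set of `L` w.r.t. the socle `w`. -/
def IterSet {β : Type} {n : ℕ} (L : Set (List β)) (w : Fin n → List β) :
    Set (Fin n → ℕ) :=
  {k | socProd w k ∈ L}

/-- Concatenation of two languages. -/
def catLang {β : Type} (X Y : Set (List β)) : Set (List β) :=
  {w | ∃ x ∈ X, ∃ y ∈ Y, w = x ++ y}

/-- The language `z* = {z^k | k ∈ ℕ}` of powers of a single word. -/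
def starWord {β : Type} (z : List β) : Set (List β) :=
  {w | ∃ k : ℕ, w = wpow z k}

/-- Kleene star of a language. -/
def starLang {β : Type} (K : Set (List β)) : Set (List β) :=
  {w | ∃ l : List (List β), (∀ u ∈ l, u ∈ K) ∧ w = l.flatten}

/-! ### Semilinear sets -/

/-- `C ⊆ ℕ^ι` is linear: `C = c + P*` for a finite `P`. -/
def IsLinearSetNat {ι : Type} (C : Set (ι → ℕ)) : Prop :=
  ∃ (c : ι → ℕ) (P : Set (ι → ℕ)), P.Finite ∧
    C = {x | ∃ p ∈ AddSubmonoid.closure P, x = c + p}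

/-- `C ⊆ ℕ^ι` is semilinear: a finite union of linear sets. -/
def IsSemilinearSetNat {ι : Type} (C : Set (ι → ℕ)) : Prop :=
  ∃ S : Set (Set (ι → ℕ)), S.Finite ∧ (∀ D ∈ S, IsLinearSetNat D) ∧ C = ⋃₀ S

/-- `L` is a bounded semilinear language: it has a socle whose iteration set is
semilinear. -/
def InBSL {β : Type} (L : Set (List β)) : Prop :=
  ∃ (n : ℕ) (w : Fin n → List β), 0 < n ∧ IsSocle L w ∧ IsSemilinearSetNat (IterSet L w)

/-! ### Finite automata, paths, runs -/

/-- A (nondeterministic) finite automaton with a single initial state, a set of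
final states and a finite set of transitions. -/
structure FinAut (α : Type) where
  σ : Type
  [finσ : Fintype σ]
  init : σ
  accept : Set σ
  δ : Set (σ × α × σ)
  finδ : δ.Finite

namespace FinAut

variable {α : Type}

/-- The type of transitions of `A`. -/
def Trans (A : FinAut α) : Type := {t : A.σ × α × A.σ // t ∈ A.δ}

def src {A : FinAut α} (t : A.Trans) : A.σ := t.1.1
def lbl {A : FinAut α} (t : A.Trans) : α := t.1.2.1
def tgt {A : FinAut α} (t : A.Trans) : A.σ := t.1.2.2

/-- `A.Steps q π r` holds when `π` is a path from state `q` to state `r`. -/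
inductive Steps (A : FinAut α) : A.σ → List A.Trans → A.σ → Prop
  | nil (q : A.σ) : Steps A q [] q
  | cons {q r : A.σ} {t : A.Trans} {π : List A.Trans} :
      src t = q → Steps A (tgt t) π r → Steps A q (t :: π) r

/-- The set of accepting paths of `A`, as a language over the transition set. -/
def Run (A : FinAut α) : Set (List A.Trans) :=
  {π | ∃ f ∈ A.accept, A.Steps A.init π f}

/-- The language of `A`: labels of accepting paths. -/
def lang (A : FinAut α) : Set (List α) :=
  {w | ∃ π ∈ A.Run, w = π.map lbl}

/-- `A` is deterministic. -/
def Deterministic (A : FinAut α) : Prop :=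
  ∀ ⦃p : A.σ⦄ ⦃a : α⦄ ⦃q q' : A.σ⦄, (p, a, q) ∈ A.δ → (p, a, q') ∈ A.δ → q = q'

/-- The Parikh image of a path: how many times each transition occurs. -/
def pathCount {A : FinAut α} (π : List A.Trans) : A.Trans → ℕ :=
  fun t => countOcc π t

/-- `A` is flat: it consists of a spine of states `q 0, …, q n` (`q 0` initial,
`q n` final, exactly one transition from `q i` to `q (i+1)` given by the label
`sl i`), together with, for at most one pair `lo k ≤ hi k` each, a back-path of
fresh states from `q (hi k)` to `q (lo k)`; the endpoints of distinct
back-paths are not strictly inside one another (no nested loops). -/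
def Flat (A : FinAut α) : Prop :=
  ∃ (n : ℕ) (q : Fin (n + 1) → A.σ) (sl : Fin n → α) (m : ℕ)
    (lo hi : Fin m → Fin (n + 1)) (fresh : Fin m → List A.σ) (bl : Fin m → List α),
    Function.Injective q ∧
    A.init = q 0 ∧
    A.accept = {q (Fin.last n)} ∧
    (∀ k, lo k ≤ hi k) ∧
    (∀ k k', k ≠ k' → (lo k, hi k) ≠ (lo k', hi k')) ∧
    (∀ k k', k ≠ k' →
      ¬(lo k < lo k' ∧ lo k' < hi k) ∧ ¬(lo k < hi k' ∧ hi k' < hi k)) ∧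
    (∀ k, (fresh k).Nodup) ∧
    (∀ k i, q i ∉ fresh k) ∧
    (∀ k k', k ≠ k' → ∀ s ∈ fresh k, s ∉ fresh k') ∧
    (∀ s : A.σ, (∃ i, s = q i) ∨ ∃ k, s ∈ fresh k) ∧
    (∀ k, (bl k).length = (fresh k).length + 1) ∧
    A.δ = {t | (∃ i : Fin n, t = (q i.castSucc, sl i, q i.succ)) ∨
        (∃ (k : Fin m) (j : ℕ) (s s' : A.σ) (a : α),
          (q (hi k) :: (fresh k ++ [q (lo k)]))[j]? = some s ∧
          (bl k)[j]? = some a ∧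
          (q (hi k) :: (fresh k ++ [q (lo k)]))[j + 1]? = some s' ∧
          t = (s, a, s'))}

end FinAut

/-! ### ε-automata -/

/-- The language of an ε-automaton (transitions labelled by `Option α`, where
`none` stands for ε): labels of accepting paths, erasing ε. -/
def epsLang {α : Type} (A : FinAut (Option α)) : Set (List α) :=
  {w | ∃ π ∈ A.Run, w = π.filterMap FinAut.lbl}

/-! ### Constrained automata -/

/-- The language of the constrained automaton `(A, C)`. -/
def CALang {α : Type} (A : FinAut α) (C : Set (A.Trans → ℕ)) : Set (List α) :=
  {w | ∃ π ∈ A.Run, FinAut.pathCount π ∈ C ∧ w = π.map FinAut.lbl}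

/-- The language of the ε-constrained automaton `(A, C)`. -/
def EpsCALang {α : Type} (A : FinAut (Option α)) (C : Set (A.Trans → ℕ)) :
    Set (List α) :=
  {w | ∃ π ∈ A.Run, FinAut.pathCount π ∈ C ∧ w = π.filterMap FinAut.lbl}

def RecByCA {α : Type} (L : Set (List α)) : Prop :=
  ∃ (A : FinAut α) (C : Set (A.Trans → ℕ)), IsSemilinearSetNat C ∧ CALang A C = L

def RecByDetCA {α : Type} (L : Set (List α)) : Prop :=
  ∃ (A : FinAut α) (C : Set (A.Trans → ℕ)),
    A.Deterministic ∧ IsSemilinearSetNat C ∧ CALang A C = L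

def RecByEpsCA {α : Type} (L : Set (List α)) : Prop :=
  ∃ (A : FinAut (Option α)) (C : Set (A.Trans → ℕ)),
    IsSemilinearSetNat C ∧ EpsCALang A C = L

/-- `L` is a finite union of languages of flat deterministic constrained
automata. -/
def FlatDetCAUnion {α : Type} (L : Set (List α)) : Prop :=
  ∃ (m : ℕ) (A : Fin m → FinAut α) (C : ∀ b, Set ((A b).Trans → ℕ)),
    (∀ b, (A b).Flat) ∧ (∀ b, (A b).Deterministic) ∧
    (∀ b, IsSemilinearSetNat (C b)) ∧ L = ⋃ b, CALang (A b) (C b)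

/-! ### Parikh automata -/

/-- Projection of a word over `Σ × ℕ^d` on `Σ`. -/
def PsiW {α : Type} {d : ℕ} (ω : List (α × (Fin d → ℕ))) : List α :=
  ω.map Prod.fst

/-- Extended Parikh image: the sum of the vector components. -/
def PhiTilde {α : Type} {d : ℕ} (ω : List (α × (Fin d → ℕ))) : Fin d → ℕ :=
  (ω.map Prod.snd).sum

/-- The language of the Parikh automaton `(A, C)`.  (Note that the set `D` of
vectors appearing on transitions of `A` is automatically finite, since the
transition set of `A` is finite.) -/
def PALang {α : Type} {d : ℕ} (A : FinAut (α × (Fin d → ℕ))) (C : Set (Fin d → ℕ)) :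
    Set (List α) :=
  {w | ∃ ω ∈ A.lang, PhiTilde ω ∈ C ∧ w = PsiW ω}

/-- Determinism for Parikh automata: at most one pair `(v, q')` for each state
`q` and letter `a`. -/
def PADet {α : Type} {d : ℕ} (A : FinAut (α × (Fin d → ℕ))) : Prop :=
  ∀ ⦃p : A.σ⦄ ⦃a : α⦄ ⦃v v' : Fin d → ℕ⦄ ⦃q q' : A.σ⦄,
    (p, (a, v), q) ∈ A.δ → (p, (a, v'), q') ∈ A.δ → v = v' ∧ q = q'

def RecByPA {α : Type} (L : Set (List α)) : Prop :=
  ∃ (d : ℕ) (A : FinAut (α × (Fin d → ℕ))) (C : Set (Fin d → ℕ)),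
    IsSemilinearSetNat C ∧ PALang A C = L

def RecByDetPA {α : Type} (L : Set (List α)) : Prop :=
  ∃ (d : ℕ) (A : FinAut (α × (Fin d → ℕ))) (C : Set (Fin d → ℕ)),
    PADet A ∧ IsSemilinearSetNat C ∧ PALang A C = L

/-! ### Affine Parikh automata -/

/-- Apply the affine functions `x ↦ M t * x + v t` of the transitions of a path,
in order (first transition first). -/
def pathApply {α : Type} {d : ℕ} (A : FinAut α) (M : A.Trans → Matrix (Fin d) (Fin d) ℕ)
    (v : A.Trans → Fin d → ℕ) : List A.Trans → (Fin d → ℕ) → (Fin d → ℕ)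
  | [], x => x
  | t :: π, x => pathApply A M v π ((M t).mulVec x + v t)

/-- The language of the affine Parikh automaton `(A, U, C)`, where the affine
function attached to transition `t` is `x ↦ M t * x + v t`. -/
def APALang {α : Type} {d : ℕ} (A : FinAut α) (M : A.Trans → Matrix (Fin d) (Fin d) ℕ)
    (v : A.Trans → Fin d → ℕ) (C : Set (Fin d → ℕ)) : Set (List α) :=
  {w | ∃ π ∈ A.Run, pathApply A M v π 0 ∈ C ∧ w = π.map FinAut.lbl}

/-- The monoid of the APA: the multiplicative matrix monoid generated by the
matrices of the transitions. -/
def APAMonoid {α : Type} {d : ℕ} (A : FinAut α) (M : A.Trans → Matrix (Fin d) (Fin d) ℕ) :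
    Set (Matrix (Fin d) (Fin d) ℕ) :=
  (Submonoid.closure (Set.range M) : Submonoid (Matrix (Fin d) (Fin d) ℕ))

/-! ### Semilinear regular expressions -/

/-- The language `y₀ x₁* y₁ ⋯ xₙ* yₙ` of a branch of an SLRE. -/
def branchLang {β : Type} {n : ℕ} (y : Fin (n + 1) → List β) (x : Fin n → List β) :
    Set (List β) :=
  {w | ∃ k : Fin n → ℕ,
    w = y 0 ++ (List.ofFn fun i : Fin n => wpow (x i) (k i) ++ y i.succ).flatten}

end


/-! ### Auxiliary development -/

noncomputable section

open Set

namespace PAux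

variable {ι κ : Type}

/-- Sumset. -/
def sumSet (A B : Set (ι → ℕ)) : Set (ι → ℕ) := {x | ∃ a ∈ A, ∃ b ∈ B, x = a + b}

lemma isLinearSet_singleton (c : ι → ℕ) : IsLinearSetNat {c} := by
  refine ⟨c, ∅, Set.finite_empty, ?_⟩
  ext x
  simp [AddSubmonoid.closure_empty, AddSubmonoid.mem_bot]

lemma linear_semilinear {A : Set (ι → ℕ)} (h : IsLinearSetNat A) :
    IsSemilinearSetNat A :=
  ⟨{A}, Set.finite_singleton _, by simpa using h, (Set.sUnion_singleton _).symm⟩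

lemma isSemilinearSet_empty : IsSemilinearSetNat (∅ : Set (ι → ℕ)) :=
  ⟨∅, Set.finite_empty, by simp, by simp⟩

lemma isSemilinearSet_iff_fin {S : Set (ι → ℕ)} :
    IsSemilinearSetNat S ↔ ∃ (n : ℕ) (f : Fin n → Set (ι → ℕ)),
      (∀ i, IsLinearSetNat (f i)) ∧ S = ⋃ i, f i := by
  constructor
  · rintro ⟨𝒮, hfin, hlin, rfl⟩
    obtain ⟨n, f, hf⟩ := hfin.fin_embedding
    refine ⟨n, fun i => f i, fun i => hlin _ (by rw [← hf]; exact ⟨i, rfl⟩), ?_⟩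
    rw [← hf]
    exact (Set.sUnion_range _)
  · rintro ⟨n, f, hlin, rfl⟩
    exact ⟨Set.range f, Set.finite_range f, by rintro D ⟨i, rfl⟩; exact hlin i,
      (Set.sUnion_range f).symm⟩

lemma isSemilinearSet_iUnion_lin {γ : Type} [Finite γ] {f : γ → Set (ι → ℕ)}
    (h : ∀ g, IsLinearSetNat (f g)) : IsSemilinearSetNat (⋃ g, f g) :=
  ⟨Set.range f, Set.finite_range f, by rintro D ⟨g, rfl⟩; exact h g,
    (Set.sUnion_range f).symm⟩

lemma isSemilinearSet_iUnion {γ : Type} [Finite γ] {f : γ → Set (ι → ℕ)}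
    (h : ∀ g, IsSemilinearSetNat (f g)) : IsSemilinearSetNat (⋃ g, f g) := by
  choose n F hF hU using fun g => (isSemilinearSet_iff_fin.1 (h g))
  have : (⋃ g, f g) = ⋃ p : Σ g : γ, Fin (n g), F p.1 p.2 := by
    ext x
    simp only [Set.mem_iUnion, Sigma.exists]
    constructor
    · rintro ⟨g, hx⟩
      rw [hU g] at hx
      obtain ⟨i, hi⟩ := Set.mem_iUnion.1 hx
      exact ⟨g, i, hi⟩
    · rintro ⟨g, i, hi⟩
      exact ⟨g, by rw [hU g]; exact Set.mem_iUnion.2 ⟨i, hi⟩⟩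
  rw [this]
  exact isSemilinearSet_iUnion_lin fun p => hF p.1 p.2

lemma semilinear_union {A B : Set (ι → ℕ)} (hA : IsSemilinearSetNat A)
    (hB : IsSemilinearSetNat B) : IsSemilinearSetNat (A ∪ B) := by
  rw [Set.union_eq_iUnion]
  exact isSemilinearSet_iUnion (by rintro (_ | _) <;> simpa)

lemma isSemilinearSet_finite {A : Set (ι → ℕ)} (h : A.Finite) : IsSemilinearSetNat A :=
  Set.Finite.induction_on (motive := fun A _ => IsSemilinearSetNat A) A h isSemilinearSet_empty
    (fun _ _ ih => by
      rw [Set.insert_eq]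
      exact semilinear_union (linear_semilinear (isLinearSet_singleton _)) ih)

lemma linear_sumSet {A B : Set (ι → ℕ)} (hA : IsLinearSetNat A) (hB : IsLinearSetNat B) :
    IsLinearSetNat (sumSet A B) := by
  obtain ⟨c, P, hP, rfl⟩ := hA
  obtain ⟨d, Q, hQ, rfl⟩ := hB
  refine ⟨c + d, P ∪ Q, hP.union hQ, ?_⟩
  ext x
  simp only [PAux.sumSet, Set.mem_setOf_eq, AddSubmonoid.closure_union,
    AddSubmonoid.mem_sup]
  constructor
  · rintro ⟨_, ⟨p, hp, rfl⟩, _, ⟨q, hq, rfl⟩, rfl⟩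
    exact ⟨p + q, ⟨p, hp, q, hq, rfl⟩, by rw [add_add_add_comm]⟩
  · rintro ⟨_, ⟨p, hp, q, hq, rfl⟩, rfl⟩
    exact ⟨c + p, ⟨p, hp, rfl⟩, d + q, ⟨q, hq, rfl⟩, by rw [add_add_add_comm]⟩

lemma semilinear_sumSet {A B : Set (ι → ℕ)} (hA : IsSemilinearSetNat A)
    (hB : IsSemilinearSetNat B) : IsSemilinearSetNat (PAux.sumSet A B) := by
  obtain ⟨n, f, hf, rfl⟩ := isSemilinearSet_iff_fin.1 hA
  obtain ⟨m, g, hg, rfl⟩ := isSemilinearSet_iff_fin.1 hB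
  have : PAux.sumSet (⋃ i, f i) (⋃ j, g j)
      = ⋃ p : Fin n × Fin m, PAux.sumSet (f p.1) (g p.2) := by
    ext x
    simp only [PAux.sumSet, Set.mem_setOf_eq, Set.mem_iUnion, Prod.exists]
    constructor
    · rintro ⟨a, ⟨i, ha⟩, b, ⟨j, hb⟩, rfl⟩
      exact ⟨i, j, a, ha, b, hb, rfl⟩
    · rintro ⟨i, j, a, ha, b, hb, rfl⟩
      exact ⟨a, ⟨i, ha⟩, b, ⟨j, hb⟩, rfl⟩
  rw [this]
  exact isSemilinearSet_iUnion_lin fun p => linear_sumSet (hf p.1) (hg p.2)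

lemma linear_image {A : Set (ι → ℕ)} (F : (ι → ℕ) →+ (κ → ℕ))
    (hA : IsLinearSetNat A) : IsLinearSetNat (F '' A) := by
  obtain ⟨c, P, hP, rfl⟩ := hA
  refine ⟨F c, F '' P, hP.image F, ?_⟩
  ext y
  simp only [Set.mem_image, Set.mem_setOf_eq]
  constructor
  · rintro ⟨x, ⟨p, hp, rfl⟩, rfl⟩
    refine ⟨F p, ?_, by rw [map_add]⟩
    rw [← AddMonoidHom.map_mclosure]
    exact AddSubmonoid.mem_map_of_mem F hp
  · rintro ⟨q, hq, rfl⟩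
    rw [← AddMonoidHom.map_mclosure] at hq
    obtain ⟨p, hp, rfl⟩ := hq
    exact ⟨c + p, ⟨p, hp, rfl⟩, by rw [map_add]⟩

lemma semilinear_image {A : Set (ι → ℕ)} (F : (ι → ℕ) →+ (κ → ℕ))
    (hA : IsSemilinearSetNat A) : IsSemilinearSetNat (F '' A) := by
  obtain ⟨n, f, hf, rfl⟩ := isSemilinearSet_iff_fin.1 hA
  rw [Set.image_iUnion]
  exact isSemilinearSet_iUnion_lin fun i => linear_image F (hf i)

/-! ### Star of a semilinear set -/

lemma closure_union_set (A B : Set (ι → ℕ)) :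
    (AddSubmonoid.closure (A ∪ B) : Set (ι → ℕ))
      = sumSet (AddSubmonoid.closure A) (AddSubmonoid.closure B) := by
  ext x
  simp only [SetLike.mem_coe, AddSubmonoid.closure_union, AddSubmonoid.mem_sup, sumSet,
    Set.mem_setOf_eq]
  constructor
  · rintro ⟨y, hy, z, hz, rfl⟩; exact ⟨y, hy, z, hz, rfl⟩
  · rintro ⟨y, hy, z, hz, rfl⟩; exact ⟨y, hy, z, hz, rfl⟩

lemma linear_star {A : Set (ι → ℕ)} (hA : IsLinearSetNat A) :
    IsSemilinearSetNat (AddSubmonoid.closure A : Set (ι → ℕ)) := by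
  obtain ⟨c, P, hP, rfl⟩ := hA
  have key : (AddSubmonoid.closure {x | ∃ p ∈ AddSubmonoid.closure P, x = c + p} : Set (ι → ℕ))
      = {0} ∪ {x | ∃ s ∈ AddSubmonoid.closure ({c} ∪ P), x = c + s} := by
    ext x
    simp only [SetLike.mem_coe, Set.mem_union, Set.mem_singleton_iff, Set.mem_setOf_eq]
    constructor
    · intro hx
      refine AddSubmonoid.closure_induction ?_ ?_ ?_ hx
      · rintro y ⟨p, hp, rfl⟩
        exact Or.inr ⟨p, AddSubmonoid.closure_mono Set.subset_union_right hp, rfl⟩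
      · exact Or.inl rfl
      · rintro y z _ _ (rfl | ⟨s, hs, rfl⟩) (rfl | ⟨t, ht, rfl⟩)
        · exact Or.inl (add_zero 0)
        · exact Or.inr ⟨t, ht, (zero_add _)⟩
        · exact Or.inr ⟨s, hs, (add_zero _)⟩
        · refine Or.inr ⟨s + (c + t), ?_, by rw [add_assoc]⟩
          exact AddSubmonoid.add_mem _ hs (AddSubmonoid.add_mem _
            (AddSubmonoid.subset_closure (Set.mem_union_left _ rfl)) ht)
    · rintro (rfl | ⟨s, hs, rfl⟩)
      · exact AddSubmonoid.zero_mem _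
      · have dec : ∀ s ∈ AddSubmonoid.closure ({c} ∪ P),
            ∃ (n : ℕ) (p : ι → ℕ), p ∈ AddSubmonoid.closure P ∧ s = n • c + p := by
          intro s hs
          refine AddSubmonoid.closure_induction ?_ ?_ ?_ hs
          · rintro y (rfl | hy)
            · exact ⟨1, 0, AddSubmonoid.zero_mem _, by simp⟩
            · exact ⟨0, y, AddSubmonoid.subset_closure hy, by simp⟩
          · exact ⟨0, 0, AddSubmonoid.zero_mem _, by simp⟩
          · rintro y z _ _ ⟨n, p, hp, rfl⟩ ⟨m, q, hq, rfl⟩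
            exact ⟨n + m, p + q, AddSubmonoid.add_mem _ hp hq,
              by rw [add_smul, add_add_add_comm]⟩
        obtain ⟨n, p, hp, rfl⟩ := dec s hs
        have hcA : c ∈ AddSubmonoid.closure {x | ∃ p ∈ AddSubmonoid.closure P, x = c + p} :=
          AddSubmonoid.subset_closure ⟨0, AddSubmonoid.zero_mem _, (add_zero c).symm⟩
        have hcp : c + p ∈ AddSubmonoid.closure {x | ∃ p ∈ AddSubmonoid.closure P, x = c + p} :=
          AddSubmonoid.subset_closure ⟨p, hp, rfl⟩
        have : c + (n • c + p) = (c + p) + n • c := by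
          rw [add_comm (n • c) p, ← add_assoc]
        rw [this]
        exact AddSubmonoid.add_mem _ hcp (AddSubmonoid.nsmul_mem _ hcA n)
  rw [key]
  refine semilinear_union (linear_semilinear (isLinearSet_singleton 0))
    (linear_semilinear ⟨c, {c} ∪ P, (Set.finite_singleton c).union hP, rfl⟩)

lemma semilinear_star {A : Set (ι → ℕ)} (hA : IsSemilinearSetNat A) :
    IsSemilinearSetNat (AddSubmonoid.closure A : Set (ι → ℕ)) := by
  obtain ⟨n, f, hf, rfl⟩ := isSemilinearSet_iff_fin.1 hA
  clear hA
  induction n with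
  | zero =>
    rw [Set.iUnion_of_empty, AddSubmonoid.closure_empty, AddSubmonoid.coe_bot]
    exact linear_semilinear (isLinearSet_singleton 0)
  | succ n ih =>
    have hu : (⋃ i : Fin (n + 1), f i) = f 0 ∪ ⋃ i : Fin n, f i.succ := by
      ext x
      simp only [Set.mem_iUnion, Set.mem_union]
      constructor
      · rintro ⟨i, hi⟩
        rcases Fin.eq_zero_or_eq_succ i with h0 | ⟨j, rfl⟩
        · left; rwa [h0] at hi
        · right; exact ⟨j, hi⟩
      · rintro (h | ⟨j, hj⟩)
        exacts [⟨0, h⟩, ⟨j.succ, hj⟩]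
    rw [hu, closure_union_set]
    exact semilinear_sumSet (linear_star (hf 0)) (ih _ (fun i => hf i.succ))

/-! ### Solution sets of linear Diophantine systems -/

section Dioph

variable [Fintype ι]

lemma sum_lt_of_le_ne {x y : ι → ℕ} (hle : x ≤ y) (hne : x ≠ y) :
    ∑ i, x i < ∑ i, y i := by
  apply Finset.sum_lt_sum (fun i _ => hle i)
  by_contra h
  push_neg at h
  exact hne (funext fun i => le_antisymm (hle i) (h i (Finset.mem_univ i)))

lemma exists_minimal_le (S : Set (ι → ℕ)) {x : ι → ℕ} (hx : x ∈ S) :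
    ∃ z ∈ S, z ≤ x ∧ ∀ y ∈ S, y ≤ z → y = z := by
  obtain ⟨n, hn⟩ : ∃ n, ∑ i, x i ≤ n := ⟨_, le_rfl⟩
  induction n generalizing x with
  | zero =>
    refine ⟨x, hx, le_rfl, fun y hy hyx => ?_⟩
    by_contra hne
    have := sum_lt_of_le_ne hyx hne
    omega
  | succ n ih =>
    by_cases hmin : ∀ y ∈ S, y ≤ x → y = x
    · exact ⟨x, hx, le_rfl, hmin⟩
    · push_neg at hmin
      obtain ⟨y, hyS, hyx, hne⟩ := hmin
      have hlt := sum_lt_of_le_ne hyx hne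
      obtain ⟨z, h1, h2, h3⟩ := ih hyS (by omega)
      exact ⟨z, h1, h2.trans hyx, h3⟩

lemma minimals_finite (S : Set (ι → ℕ)) :
    {x | x ∈ S ∧ ∀ y ∈ S, y ≤ x → y = x}.Finite := by
  have h : Set.IsPWO {x | x ∈ S ∧ ∀ y ∈ S, y ≤ x → y = x} :=
    Set.isPWO_of_wellQuasiOrderedLE _
  apply IsAntichain.finite_of_partiallyWellOrderedOn _ h
  intro a ha b hb hne hle
  exact hne (hb.2 a ha.1 hle)

lemma isSemilinearSet_eqSet (F G : (ι → ℕ) →+ (κ → ℕ)) (a b : κ → ℕ) :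
    IsSemilinearSetNat {x : ι → ℕ | F x + a = G x + b} := by
  set Sol := {x : ι → ℕ | F x + a = G x + b} with hSolDef
  set Hom := {x : ι → ℕ | F x = G x ∧ x ≠ 0} with hHomDef
  set MS := {x | x ∈ Sol ∧ ∀ y ∈ Sol, y ≤ x → y = x} with hMSDef
  set MH := {x | x ∈ Hom ∧ ∀ y ∈ Hom, y ≤ x → y = x} with hMHDef
  have hMSfin : MS.Finite := minimals_finite Sol
  have hMHfin : MH.Finite := minimals_finite Hom
  have hclhom : ∀ p ∈ AddSubmonoid.closure MH, F p = G p := by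
    intro p hp
    refine AddSubmonoid.closure_induction ?_ ?_ ?_ hp
    · exact fun x hx => hx.1.1
    · simp
    · intro x y _ _ hx hy
      rw [map_add, map_add, hx, hy]
  have main : ∀ (n : ℕ) (x : ι → ℕ), x ∈ Sol → (∑ i, x i) ≤ n →
      ∃ m ∈ MS, ∃ p ∈ AddSubmonoid.closure MH, x = m + p := by
    intro n
    induction n with
    | zero =>
      intro x hx hn
      refine ⟨x, ⟨hx, fun y hy hyx => ?_⟩, 0, AddSubmonoid.zero_mem _, (add_zero x).symm⟩
      by_contra hne
      have := sum_lt_of_le_ne hyx hne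
      omega
    | succ n ih =>
      intro x hx hn
      by_cases hmin : ∀ y ∈ Sol, y ≤ x → y = x
      · exact ⟨x, ⟨hx, hmin⟩, 0, AddSubmonoid.zero_mem _, (add_zero x).symm⟩
      · push_neg at hmin
        obtain ⟨y, hyS, hyx, hyne⟩ := hmin
        have hyd : y + (x - y) = x := funext fun i => Nat.add_sub_cancel' (hyx i)
        have hdHom : (x - y) ∈ Hom := by
          constructor
          · have h1 : F (y + (x - y)) + a = G (y + (x - y)) + b := by rw [hyd]; exact hx
            rw [map_add, map_add] at h1
            have h2 : F y + a = G y + b := hyS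
            funext i
            have e1 := congrFun h1 i
            have e2 := congrFun h2 i
            simp only [Pi.add_apply] at e1 e2 ⊢
            omega
          · intro h0
            rw [h0, add_zero] at hyd
            exact hyne hyd
        obtain ⟨z, hz1, hzle, hz3⟩ := exists_minimal_le Hom hdHom
        have hzMH : z ∈ MH := ⟨hz1, hz3⟩
        have hzx : z ≤ x := fun i => (hzle i).trans (Nat.sub_le _ _)
        have hzx' : z + (x - z) = x := funext fun i => Nat.add_sub_cancel' (hzx i)
        have heSol : (x - z) ∈ Sol := by
          have h1 : F (z + (x - z)) + a = G (z + (x - z)) + b := by rw [hzx']; exact hx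
          rw [map_add, map_add] at h1
          have h2 : F z = G z := hz1.1
          show F (x - z) + a = G (x - z) + b
          funext i
          have e1 := congrFun h1 i
          have e2 := congrFun h2 i
          simp only [Pi.add_apply] at e1 e2 ⊢
          omega
        have hzne : z ≠ 0 := hz1.2
        have hsum : (∑ i, (x - z) i) ≤ n := by
          have h1 : (∑ i, z i) + ∑ i, (x - z) i = ∑ i, x i := by
            rw [← Finset.sum_add_distrib]
            exact Finset.sum_congr rfl fun i _ => congrFun hzx' i
          have h2 : (∑ i, z i) ≠ 0 := fun h =>
            hzne (funext fun i => Finset.sum_eq_zero_iff.1 h i (Finset.mem_univ i))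
          omega
        obtain ⟨m, hm, p, hp, hxe⟩ := ih (x - z) heSol hsum
        refine ⟨m, hm, p + z,
          AddSubmonoid.add_mem _ hp (AddSubmonoid.subset_closure hzMH), ?_⟩
        calc x = z + (x - z) := hzx'.symm
        _ = z + (m + p) := by rw [hxe]
        _ = m + (p + z) := by rw [add_comm z, add_assoc]
  have key : Sol = ⋃₀ ((fun m => {x | ∃ p ∈ AddSubmonoid.closure MH, x = m + p}) '' MS) := by
    ext x
    simp only [Set.mem_sUnion, Set.mem_image]
    constructor
    · intro hx
      obtain ⟨m, hm, p, hp, rfl⟩ := main (∑ i, x i) x hx le_rfl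
      exact ⟨{x | ∃ q ∈ AddSubmonoid.closure MH, x = m + q}, ⟨m, hm, rfl⟩, ⟨p, hp, rfl⟩⟩
    · rintro ⟨_, ⟨m, hm, rfl⟩, p, hp, rfl⟩
      show F (m + p) + a = G (m + p) + b
      have h1 : F m + a = G m + b := hm.1
      have h2 : F p = G p := hclhom p hp
      funext i
      have e1 := congrFun h1 i
      have e2 := congrFun h2 i
      simp only [Pi.add_apply, map_add] at e1 e2 ⊢
      omega
  rw [key]
  refine ⟨_, hMSfin.image _, ?_, rfl⟩
  rintro D ⟨m, hm, rfl⟩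
  exact ⟨m, MH, hMHfin, rfl⟩

end Dioph

/-! ### Intersections and preimages -/

lemma exists_range_eq {γ : Type} {S : Set γ} (hS : S.Finite) :
    ∃ (n : ℕ) (p : Fin n → γ), S = Set.range p := by
  obtain ⟨n, f, hf⟩ := hS.fin_embedding
  exact ⟨n, f, hf.symm⟩

lemma mem_closure_range_iff {n : ℕ} (p : Fin n → (ι → ℕ)) (z : ι → ℕ) :
    z ∈ AddSubmonoid.closure (Set.range p) ↔ ∃ u : Fin n → ℕ, z = ∑ i, u i • p i := by
  constructor
  · intro hz
    refine AddSubmonoid.closure_induction ?_ ?_ ?_ hz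
    · rintro x ⟨i, rfl⟩
      refine ⟨Pi.single i 1, ?_⟩
      simp [Pi.single_apply, ite_smul]
    · exact ⟨0, by simp⟩
    · rintro x y _ _ ⟨u, rfl⟩ ⟨v, rfl⟩
      exact ⟨u + v, by simp [add_smul, Finset.sum_add_distrib]⟩
  · rintro ⟨u, rfl⟩
    exact AddSubmonoid.sum_mem _ fun i _ =>
      AddSubmonoid.nsmul_mem _ (AddSubmonoid.subset_closure (Set.mem_range_self i)) _

lemma linear_inter {A B : Set (ι → ℕ)} (hA : IsLinearSetNat A) (hB : IsLinearSetNat B) :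
    IsSemilinearSetNat (A ∩ B) := by
  obtain ⟨c, P, hP, rfl⟩ := hA
  obtain ⟨d, Q, hQ, rfl⟩ := hB
  obtain ⟨np, p, rfl⟩ := exists_range_eq hP
  obtain ⟨nq, q, rfl⟩ := exists_range_eq hQ
  let F : ((Fin np ⊕ Fin nq) → ℕ) →+ (ι → ℕ) :=
    { toFun := fun w => ∑ i, w (Sum.inl i) • p i
      map_zero' := by simp
      map_add' := fun w w' => by simp [add_smul, Finset.sum_add_distrib] }
  let G : ((Fin np ⊕ Fin nq) → ℕ) →+ (ι → ℕ) :=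
    { toFun := fun w => ∑ j, w (Sum.inr j) • q j
      map_zero' := by simp
      map_add' := fun w w' => by simp [add_smul, Finset.sum_add_distrib] }
  have hSol := isSemilinearSet_eqSet F G c d
  have hkey : {x | ∃ s ∈ AddSubmonoid.closure (Set.range p), x = c + s}
        ∩ {x | ∃ s ∈ AddSubmonoid.closure (Set.range q), x = d + s}
      = sumSet {c} (⇑F '' {w | F w + c = G w + d}) := by
    ext x
    constructor
    · rintro ⟨⟨s, hs, hxs⟩, ⟨t, ht, hxt⟩⟩
      obtain ⟨u, rfl⟩ := (mem_closure_range_iff p s).1 hs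
      obtain ⟨v, rfl⟩ := (mem_closure_range_iff q t).1 ht
      refine ⟨c, rfl, F (Sum.elim u v), ⟨Sum.elim u v, ?_, rfl⟩, ?_⟩
      · show F (Sum.elim u v) + c = G (Sum.elim u v) + d
        have h1 : F (Sum.elim u v) = ∑ i, u i • p i := rfl
        have h2 : G (Sum.elim u v) = ∑ j, v j • q j := rfl
        rw [h1, h2, add_comm _ c, add_comm _ d, ← hxs, ← hxt]
      · show x = c + F (Sum.elim u v)
        rw [hxs]; rfl
    · rintro ⟨c', hc', _, ⟨w, hw, rfl⟩, rfl⟩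
      obtain rfl : c' = c := hc'
      have hw' : F w + c' = G w + d := hw
      constructor
      · exact ⟨F w, (mem_closure_range_iff p _).2 ⟨fun i => w (Sum.inl i), rfl⟩, rfl⟩
      · refine ⟨G w, (mem_closure_range_iff q _).2 ⟨fun j => w (Sum.inr j), rfl⟩, ?_⟩
        rw [add_comm c', hw', add_comm]
  rw [hkey]
  exact semilinear_sumSet (linear_semilinear (isLinearSet_singleton c))
    (semilinear_image F hSol)

lemma semilinear_inter {A B : Set (ι → ℕ)} (hA : IsSemilinearSetNat A)
    (hB : IsSemilinearSetNat B) : IsSemilinearSetNat (A ∩ B) := by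
  obtain ⟨n, f, hf, rfl⟩ := isSemilinearSet_iff_fin.1 hA
  obtain ⟨m, g, hg, rfl⟩ := isSemilinearSet_iff_fin.1 hB
  have : (⋃ i, f i) ∩ (⋃ j, g j) = ⋃ q : Fin n × Fin m, (f q.1 ∩ g q.2) := by
    ext x
    simp only [Set.mem_inter_iff, Set.mem_iUnion, Prod.exists]
    constructor
    · rintro ⟨⟨i, hi⟩, ⟨j, hj⟩⟩
      exact ⟨i, j, hi, hj⟩
    · rintro ⟨i, j, hi, hj⟩
      exact ⟨⟨i, hi⟩, ⟨j, hj⟩⟩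
  rw [this]
  exact isSemilinearSet_iUnion fun q => linear_inter (hf q.1) (hg q.2)

lemma linear_preimage [Finite ι] {C : Set (κ → ℕ)} (H : (ι → ℕ) →+ (κ → ℕ))
    (hC : IsLinearSetNat C) : IsSemilinearSetNat (H ⁻¹' C) := by
  haveI := Fintype.ofFinite ι
  obtain ⟨c, Q, hQ, rfl⟩ := hC
  obtain ⟨m, q, rfl⟩ := exists_range_eq hQ
  let Pr : ((ι ⊕ Fin m) → ℕ) →+ (ι → ℕ) :=
    { toFun := fun z => z ∘ Sum.inl
      map_zero' := rfl
      map_add' := fun _ _ => rfl }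
  let F : ((ι ⊕ Fin m) → ℕ) →+ (κ → ℕ) := H.comp Pr
  let G : ((ι ⊕ Fin m) → ℕ) →+ (κ → ℕ) :=
    { toFun := fun z => ∑ j, z (Sum.inr j) • q j
      map_zero' := by simp
      map_add' := fun z z' => by simp [add_smul, Finset.sum_add_distrib] }
  have hSol := isSemilinearSet_eqSet F G 0 c
  have hkey : H ⁻¹' {y | ∃ s ∈ AddSubmonoid.closure (Set.range q), y = c + s}
      = ⇑Pr '' {z | F z + 0 = G z + c} := by
    ext x
    constructor
    · rintro ⟨s, hs, hxs⟩
      obtain ⟨v, rfl⟩ := (mem_closure_range_iff q s).1 hs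
      refine ⟨Sum.elim x v, ?_, rfl⟩
      show F (Sum.elim x v) + 0 = G (Sum.elim x v) + c
      have h1 : F (Sum.elim x v) = H x := rfl
      have h2 : G (Sum.elim x v) = ∑ j, v j • q j := rfl
      rw [h1, h2, add_zero, hxs, add_comm]
    · rintro ⟨z, hz, rfl⟩
      have hz' : F z + 0 = G z + c := hz
      rw [add_zero] at hz'
      refine ⟨G z, (mem_closure_range_iff q _).2 ⟨fun j => z (Sum.inr j), rfl⟩, ?_⟩
      show H (Pr z) = c + G z
      have h1 : H (Pr z) = F z := rfl
      rw [h1, hz', add_comm]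
  rw [hkey]
  exact semilinear_image Pr hSol

lemma semilinear_preimage [Finite ι] {C : Set (κ → ℕ)} (H : (ι → ℕ) →+ (κ → ℕ))
    (hC : IsSemilinearSetNat C) : IsSemilinearSetNat (H ⁻¹' C) := by
  obtain ⟨n, f, hf, rfl⟩ := isSemilinearSet_iff_fin.1 hC
  rw [Set.preimage_iUnion]
  exact isSemilinearSet_iUnion fun i => linear_preimage H (hf i)

/-! ### Counting lemmas -/

lemma countOcc_cons {β : Type} (a : β) (l : List β) (b : β) :
    countOcc (a :: l) b = (if a = b then 1 else 0) + countOcc l b := by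
  simp only [countOcc, List.filter_cons]
  by_cases h : a = b
  · simp [h, Nat.add_comm]
  · simp [h]

lemma countOcc_append {β : Type} (l₁ l₂ : List β) (b : β) :
    countOcc (l₁ ++ l₂) b = countOcc l₁ b + countOcc l₂ b := by
  simp [countOcc, List.filter_append]

lemma sum_map_eq_sum_countOcc {β : Type} [Fintype β] (π : List β) (v : β → ℕ) :
    (π.map v).sum = ∑ t, countOcc π t * v t := by
  induction π with
  | nil => simp [countOcc]
  | cons a l ih =>
    rw [List.map_cons, List.sum_cons, ih]
    calc v a + ∑ t, countOcc l t * v t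
        = (∑ t, (if a = t then 1 else 0) * v t) + ∑ t, countOcc l t * v t := by
          congr 1
          simp [ite_mul, Finset.sum_ite_eq, Finset.sum_ite_eq']
      _ = ∑ t, countOcc (a :: l) t * v t := by
          rw [← Finset.sum_add_distrib]
          exact Finset.sum_congr rfl fun t _ => by rw [countOcc_cons, add_mul]

lemma countOcc_map_eq_sum {β δ : Type} [Fintype β] (f : β → δ) (b : δ) (π : List β) :
    countOcc (π.map f) b = ∑ t, countOcc π t * (if f t = b then 1 else 0) := by
  rw [← sum_map_eq_sum_countOcc]
  induction π with
  | nil => simp [countOcc]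
  | cons a l ih =>
    rw [List.map_cons, countOcc_cons, List.map_cons, List.sum_cons, ih]

lemma list_sum_apply {β ι' : Type} (π : List β) (v : β → (ι' → ℕ)) (j : ι') :
    (π.map v).sum j = (π.map fun t => v t j).sum := by
  induction π with
  | nil => rfl
  | cons a l ih => simp [List.map_cons, List.sum_cons, ih]

/-- The linear map `x ↦ ∑ t, x t • v t`. -/
def vecHom {β ι' : Type} [Fintype β] (v : β → (ι' → ℕ)) : (β → ℕ) →+ (ι' → ℕ) where
  toFun := fun x => ∑ t, x t • v t
  map_zero' := by simp
  map_add' := fun x y => by simp [add_smul, Finset.sum_add_distrib]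

lemma vecHom_apply {β ι' : Type} [Fintype β] (v : β → (ι' → ℕ)) (x : β → ℕ) (i : ι') :
    vecHom v x i = ∑ t, x t * v t i := by
  simp [vecHom, Finset.sum_apply, Pi.smul_apply, smul_eq_mul]

/-! ### Paths in finite automata -/

section Automaton

variable {γ : Type} {A : FinAut γ}

lemma pathCount_append (π₁ π₂ : List A.Trans) :
    FinAut.pathCount (π₁ ++ π₂) = FinAut.pathCount π₁ + FinAut.pathCount π₂ :=
  funext fun t => countOcc_append _ _ _

lemma steps_append {p r q : A.σ} {π₁ : List A.Trans} (h1 : A.Steps p π₁ r) :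
    ∀ {π₂}, A.Steps r π₂ q → A.Steps p (π₁ ++ π₂) q := by
  induction h1 with
  | nil => intro π₂ h2; simpa using h2
  | cons hsrc _ ih => intro π₂ h2; exact FinAut.Steps.cons hsrc (ih h2)

lemma steps_head_src {p q : A.σ} {t : A.Trans} {π : List A.Trans}
    (h : A.Steps p (t :: π) q) : FinAut.src t = p := by
  cases h with | cons hsrc _ => exact hsrc

/-- All the intermediate states of the path lie in `S`. -/
def Mid (S : Set A.σ) (π : List A.Trans) : Prop := ∀ t ∈ π.tail, FinAut.src t ∈ S

lemma mid_mono {S S' : Set A.σ} (h : S ⊆ S') {π : List A.Trans} (hm : Mid S π) :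
    Mid S' π := fun t ht => h (hm t ht)

lemma mid_nil (S : Set A.σ) : Mid S ([] : List A.Trans) :=
  fun t ht => absurd ht (List.not_mem_nil)

lemma mid_append {S : Set A.σ} {π₁ π₂ : List A.Trans} (h1 : Mid S π₁) (h2 : Mid S π₂)
    (hh : ∀ t ∈ π₂.head?, FinAut.src t ∈ S) : Mid S (π₁ ++ π₂) := by
  cases π₁ with
  | nil => simpa using h2
  | cons a l =>
    intro t ht
    rw [List.cons_append, List.tail_cons] at ht
    rcases List.mem_append.1 ht with h | h
    · exact h1 t (by simpa using h)
    · cases π₂ with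
      | nil => exact absurd h (List.not_mem_nil)
      | cons b m =>
        rcases List.mem_cons.1 h with rfl | h
        · exact hh _ (by simp)
        · exact h2 t (by simpa using h)

/-- Parikh images of paths from `p` to `q` with intermediate states in `S`. -/
def NSet (A : FinAut γ) (p q : A.σ) (S : Set A.σ) : Set (A.Trans → ℕ) :=
  {x | ∃ π, A.Steps p π q ∧ Mid S π ∧ x = FinAut.pathCount π}

lemma exists_first_split {p q r : A.σ} {π : List A.Trans} (hst : A.Steps p π q)
    (hr : ∃ t ∈ π.tail, FinAut.src t = r) :
    ∃ π₁ π₂, π = π₁ ++ π₂ ∧ π₁ ≠ [] ∧ π₂ ≠ [] ∧ A.Steps p π₁ r ∧ A.Steps r π₂ q ∧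
      ∀ t ∈ π₁.tail, FinAut.src t ≠ r := by
  induction π generalizing p with
  | nil => simp at hr
  | cons t l ih =>
    cases hst with
    | cons hsrc htl =>
      rw [List.tail_cons] at hr
      cases l with
      | nil => simp at hr
      | cons u l' =>
        by_cases hu : FinAut.src u = r
        · have htgt : FinAut.tgt t = r := by
            have h := steps_head_src htl
            rw [← hu, h]
          refine ⟨[t], u :: l', rfl, by simp, by simp, ?_, ?_, by simp⟩
          · have h : A.Steps p [t] (FinAut.tgt t) :=
              FinAut.Steps.cons hsrc (FinAut.Steps.nil _)
            rwa [htgt] at h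
          · rwa [htgt] at htl
        · have hr' : ∃ v ∈ (u :: l').tail, FinAut.src v = r := by
            obtain ⟨v, hv, hvr⟩ := hr
            rcases List.mem_cons.1 hv with rfl | hv'
            · exact absurd hvr hu
            · exact ⟨v, by simpa using hv', hvr⟩
          obtain ⟨π₁, π₂, heq, hne1, hne2, hs1, hs2, hnr⟩ := ih htl hr'
          cases π₁ with
          | nil => exact absurd rfl hne1
          | cons w ws =>
            rw [List.cons_append] at heq
            injection heq with h1 h2
            subst h1
            subst h2
            refine ⟨t :: u :: ws, π₂, rfl, by simp, hne2,
              FinAut.Steps.cons hsrc hs1, hs2, ?_⟩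
            intro v hv
            rw [List.tail_cons] at hv
            rcases List.mem_cons.1 hv with rfl | hv'
            · exact hu
            · exact hnr v (by simpa using hv')

lemma nset_decomp : ∀ (n : ℕ) (p : A.σ) (π : List A.Trans), π.length ≤ n →
    ∀ {q r : A.σ} {S : Set A.σ}, A.Steps p π q → Mid (insert r S) π →
    FinAut.pathCount π ∈ NSet A p q S ∨
      ∃ x₁ ∈ NSet A p r S, ∃ x₂ ∈ AddSubmonoid.closure (NSet A r r S),
        ∃ x₃ ∈ NSet A r q S, FinAut.pathCount π = x₁ + x₂ + x₃ := by
  intro n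
  induction n with
  | zero =>
    intro p π hlen q r S hst hm
    have hnil : π = [] := List.length_eq_zero_iff.1 (Nat.le_zero.1 hlen)
    subst hnil
    exact Or.inl ⟨[], hst, mid_nil S, rfl⟩
  | succ n ih =>
    intro p π hlen q r S hst hm
    by_cases hmid : Mid S π
    · exact Or.inl ⟨π, hst, hmid, rfl⟩
    · have hr : ∃ t ∈ π.tail, FinAut.src t = r := by
        unfold Mid at hmid
        push_neg at hmid
        obtain ⟨t, ht, hts⟩ := hmid
        refine ⟨t, ht, ?_⟩
        rcases Set.mem_insert_iff.1 (hm t ht) with h | h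
        · exact h
        · exact absurd h hts
      obtain ⟨π₁, π₂, rfl, hne1, hne2, hs1, hs2, hnr⟩ := exists_first_split hst hr
      have hm1 : Mid S π₁ := by
        intro t ht
        have h1 : t ∈ (π₁ ++ π₂).tail := by
          cases π₁ with
          | nil => exact absurd rfl hne1
          | cons a l =>
            rw [List.cons_append, List.tail_cons]
            exact List.mem_append_left _ (by simpa using ht)
        rcases Set.mem_insert_iff.1 (hm t h1) with h | h
        · exact absurd h (hnr t ht)
        · exact h
      have hm2 : Mid (insert r S) π₂ := by
        intro t ht
        apply hm
        cases π₁ with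
        | nil => exact absurd rfl hne1
        | cons a l =>
          rw [List.cons_append, List.tail_cons]
          exact List.mem_append_right _ (List.mem_of_mem_tail ht)
      have hlen2 : π₂.length ≤ n := by
        rw [List.length_append] at hlen
        have h1 : 1 ≤ π₁.length := by
          cases π₁ with
          | nil => exact absurd rfl hne1
          | cons a l => simp
        omega
      have hx1 : FinAut.pathCount π₁ ∈ NSet A p r S := ⟨π₁, hs1, hm1, rfl⟩
      rcases ih r π₂ hlen2 hs2 hm2 with h | ⟨x₁, hx₁, x₂, hx₂, x₃, hx₃, he⟩
      · right
        exact ⟨_, hx1, 0, AddSubmonoid.zero_mem _, _, h, by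
          rw [pathCount_append, add_zero]⟩
      · right
        refine ⟨_, hx1, x₁ + x₂,
          AddSubmonoid.add_mem _ (AddSubmonoid.subset_closure hx₁) hx₂, x₃, hx₃, ?_⟩
        rw [pathCount_append, he, ← add_assoc, ← add_assoc]

lemma nset_mono {p q : A.σ} {S S' : Set A.σ} (h : S ⊆ S') :
    NSet A p q S ⊆ NSet A p q S' := by
  rintro x ⟨π, h1, h2, rfl⟩
  exact ⟨π, h1, mid_mono h h2, rfl⟩

lemma nset_insert (p q r : A.σ) (S : Set A.σ) :
    NSet A p q (insert r S) = NSet A p q S ∪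
      {x | ∃ x₁ ∈ NSet A p r S, ∃ x₂ ∈ AddSubmonoid.closure (NSet A r r S),
        ∃ x₃ ∈ NSet A r q S, x = x₁ + x₂ + x₃} := by
  ext x
  constructor
  · rintro ⟨π, hst, hm, rfl⟩
    rcases nset_decomp π.length p π le_rfl hst hm with h | h
    · exact Or.inl h
    · exact Or.inr h
  · rintro (⟨π, hst, hm, rfl⟩ | ⟨x₁, ⟨π₁, hs1, hm1, rfl⟩, x₂, hx₂, x₃, ⟨π₃, hs3, hm3, rfl⟩, rfl⟩)
    · exact ⟨π, hst, mid_mono (Set.subset_insert r S) hm, rfl⟩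
    · have hx₂' : ∃ πm, A.Steps r πm r ∧ Mid (insert r S) πm ∧ x₂ = FinAut.pathCount πm := by
        refine AddSubmonoid.closure_induction ?_ ?_ ?_ hx₂
        · rintro y ⟨π, h1, h2, rfl⟩
          exact ⟨π, h1, mid_mono (Set.subset_insert r S) h2, rfl⟩
        · exact ⟨[], FinAut.Steps.nil r, mid_nil _, by funext t; rfl⟩
        · rintro y z _ _ ⟨πa, ha1, ha2, rfl⟩ ⟨πb, hb1, hb2, rfl⟩
          refine ⟨πa ++ πb, steps_append ha1 hb1, ?_, (pathCount_append _ _).symm⟩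
          refine mid_append ha2 hb2 ?_
          intro t ht
          cases πb with
          | nil => simp at ht
          | cons b m =>
            have hb : b = t := by simpa using ht
            rw [← hb, steps_head_src hb1]
            exact Set.mem_insert r S
      obtain ⟨πm, hsm, hmm, rfl⟩ := hx₂'
      refine ⟨π₁ ++ πm ++ π₃, steps_append (steps_append hs1 hsm) hs3, ?_,
        by rw [pathCount_append, pathCount_append]⟩
      refine mid_append (mid_append (mid_mono (Set.subset_insert r S) hm1) hmm ?_)
        (mid_mono (Set.subset_insert r S) hm3) ?_
      · intro t ht
        cases πm with
        | nil => simp at ht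
        | cons b m =>
          have hb : b = t := by simpa using ht
          rw [← hb, steps_head_src hsm]
          exact Set.mem_insert r S
      · intro t ht
        cases π₃ with
        | nil => simp at ht
        | cons b m =>
          have hb : b = t := by simpa using ht
          rw [← hb, steps_head_src hs3]
          exact Set.mem_insert r S

lemma triple_sum_eq {β : Type} (X : Set (β → ℕ)) (Cl : AddSubmonoid (β → ℕ))
    (Y : Set (β → ℕ)) :
    {x | ∃ x₁ ∈ X, ∃ x₂ ∈ Cl, ∃ x₃ ∈ Y, x = x₁ + x₂ + x₃}
      = sumSet (sumSet X (Cl : Set (β → ℕ))) Y := by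
  ext x
  constructor
  · rintro ⟨x₁, h1, x₂, h2, x₃, h3, rfl⟩
    exact ⟨x₁ + x₂, ⟨x₁, h1, x₂, h2, rfl⟩, x₃, h3, rfl⟩
  · rintro ⟨_, ⟨x₁, h1, x₂, h2, rfl⟩, x₃, h3, rfl⟩
    exact ⟨x₁, h1, x₂, h2, x₃, h3, rfl⟩

lemma nset_semilinear [Finite A.Trans] (S : Finset A.σ) :
    ∀ p q : A.σ, IsSemilinearSetNat (NSet A p q (↑S : Set A.σ)) := by
  induction S using Finset.induction_on with
  | empty =>
    intro p q
    apply isSemilinearSet_finite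
    have hsub : NSet A p q (↑(∅ : Finset A.σ) : Set A.σ) ⊆
        {(0 : A.Trans → ℕ)} ∪ Set.range (fun t : A.Trans => FinAut.pathCount [t]) := by
      rintro x ⟨π, hst, hm, rfl⟩
      have hπ : π = [] ∨ ∃ t, π = [t] := by
        cases π with
        | nil => exact Or.inl rfl
        | cons t l =>
          cases l with
          | nil => exact Or.inr ⟨t, rfl⟩
          | cons u m => exact absurd (hm u (by simp)) (by simp)
      rcases hπ with rfl | ⟨t, rfl⟩
      · exact Or.inl (funext fun t => rfl)
      · exact Or.inr ⟨t, rfl⟩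
    exact Set.Finite.subset ((Set.finite_singleton _).union (Set.finite_range _)) hsub
  | @insert a s hna ih =>
    intro p q
    rw [Finset.coe_insert, nset_insert, triple_sum_eq]
    exact semilinear_union (ih p q)
      (semilinear_sumSet (semilinear_sumSet (ih p a) (semilinear_star (ih a a))) (ih a q))

lemma run_count_semilinear (A : FinAut γ) :
    IsSemilinearSetNat {x | ∃ π ∈ A.Run, x = FinAut.pathCount π} := by
  haveI := A.finσ
  haveI : Finite A.Trans := A.finδ.to_subtype
  have hsplit : {x | ∃ π ∈ A.Run, x = FinAut.pathCount π}
      = ⋃ f : A.σ, {x | f ∈ A.accept ∧ x ∈ NSet A A.init f Set.univ} := by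
    ext x
    simp only [Set.mem_iUnion, Set.mem_setOf_eq]
    constructor
    · rintro ⟨π, ⟨f, hf, hst⟩, rfl⟩
      exact ⟨f, hf, ⟨π, hst, fun t _ => Set.mem_univ _, rfl⟩⟩
    · rintro ⟨f, hf, ⟨π, hst, _, rfl⟩⟩
      exact ⟨π, ⟨f, hf, hst⟩, rfl⟩
  rw [hsplit]
  apply isSemilinearSet_iUnion
  intro f
  by_cases hf : f ∈ A.accept
  · have h1 : {x | f ∈ A.accept ∧ x ∈ NSet A A.init f Set.univ}
        = NSet A A.init f Set.univ := by
      ext x; simp [hf]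
    rw [h1, ← Finset.coe_univ]
    exact nset_semilinear Finset.univ A.init f
  · have h1 : {x | f ∈ A.accept ∧ x ∈ NSet A A.init f Set.univ} = ∅ := by
      ext x; simp [hf]
    rw [h1]
    exact isSemilinearSet_empty

end Automaton

end PAux

end

/-- The Parikh image of every PA language is semilinear: for
a finite ordered alphabet `Σ = {a₁, …, aₖ}` (given by the equivalence `e`), the
set of Parikh images of the words of a PA language is a semilinear subset of
`ℕ^k`. -/
theorem pa_parikh_semilinear {α : Type} {k : ℕ} (e : α ≃ Fin k)
    (L : Set (List α)) (h : RecByPA L) :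
    IsSemilinearSetNat {x : Fin k → ℕ | ∃ w ∈ L, x = fun i => countOcc w (e.symm i)} := by
  classical
  obtain ⟨d, A, C, hC, rfl⟩ := h
  haveI : Finite A.Trans := A.finδ.to_subtype
  haveI : Fintype A.Trans := Fintype.ofFinite _
  set G := PAux.vecHom (fun t : A.Trans =>
    (fun i : Fin k => if (FinAut.lbl t).1 = e.symm i then 1 else 0)) with hGdef
  set H := PAux.vecHom (fun t : A.Trans => (FinAut.lbl t).2) with hHdef
  have hGeq : ∀ π : List A.Trans,
      (fun i => countOcc (PsiW (π.map FinAut.lbl)) (e.symm i))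
        = G (FinAut.pathCount π) := by
    intro π
    funext i
    have h1 : PsiW (π.map FinAut.lbl) = π.map (fun t => (FinAut.lbl t).1) := by
      unfold PsiW
      rw [List.map_map]
      rfl
    rw [h1, PAux.countOcc_map_eq_sum, hGdef, PAux.vecHom_apply]
    rfl
  have hHeq : ∀ π : List A.Trans,
      H (FinAut.pathCount π) = PhiTilde (π.map FinAut.lbl) := by
    intro π
    funext j
    have h1 : PhiTilde (π.map FinAut.lbl) = (π.map (fun t => (FinAut.lbl t).2)).sum := by
      unfold PhiTilde
      rw [List.map_map]
      rfl
    rw [h1, hHdef, PAux.vecHom_apply, PAux.list_sum_apply, PAux.sum_map_eq_sum_countOcc]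
    rfl
  have hT : {x : Fin k → ℕ | ∃ w ∈ PALang A C, x = fun i => countOcc w (e.symm i)}
      = ⇑G '' ({x | ∃ π ∈ A.Run, x = FinAut.pathCount π} ∩ ⇑H ⁻¹' C) := by
    ext x
    simp only [Set.mem_setOf_eq, Set.mem_image, Set.mem_inter_iff, Set.mem_preimage]
    constructor
    · rintro ⟨w, ⟨ω, ⟨π, hπ, rfl⟩, hPhi, rfl⟩, rfl⟩
      refine ⟨FinAut.pathCount π, ⟨⟨π, hπ, rfl⟩, ?_⟩, ?_⟩
      · rw [hHeq π]; exact hPhi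
      · exact (hGeq π).symm
    · rintro ⟨y, ⟨⟨π, hπ, rfl⟩, hC'⟩, rfl⟩
      refine ⟨PsiW (π.map FinAut.lbl), ⟨π.map FinAut.lbl, ⟨π, hπ, rfl⟩, ?_, rfl⟩, ?_⟩
      · rw [← hHeq π]; exact hC'
      · exact (hGeq π).symm
  rw [hT]
  exact PAux.semilinear_image G (PAux.semilinear_inter (PAux.run_count_semilinear A)
    (PAux.semilinear_preimage H hC))
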